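/- arXiv:2406.19250 — 4 statements merged into one kernel-verified Lean document; each statement's English description precedes it below -/
import Mathlib

section
/- Assume condition (g) and condition (g2). Then for all real numbers a and b, (G(|a|) + G(|b|))/2 ≥ G(|a + b|/2) + G(|a − b|/2). -/
open MeasureTheory Set Real Filter

noncomputable section

/-- The Young function `G(t) = ∫₀ᵗ g(τ) dτ`. -/
def YoungG (g : ℝ → ℝ) (t : ℝ) : ℝ := ∫ τ in (0:ℝ)..t, g τ

/-- Basic structural hypotheses on `g`: right-continuous, non-decreasing on `[0,∞)`,
`g(0) = 0`, `g > 0` on `(0,∞)`, and `g(t) → ∞` as `t → ∞`. -/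
def YoungHyp (g : ℝ → ℝ) : Prop :=
  g 0 = 0 ∧ (∀ t > (0:ℝ), 0 < g t) ∧ MonotoneOn g (Set.Ici 0) ∧
    (∀ t ≥ (0:ℝ), ContinuousWithinAt g (Set.Ici t) t) ∧
    Filter.Tendsto g Filter.atTop Filter.atTop

/-- Condition (g): `1 < q⁻ ≤ t·g(t)/G(t) ≤ q⁺ < ∞` for all `t > 0`. -/
def CondG (g : ℝ → ℝ) (qm qp : ℝ) : Prop :=
  1 < qm ∧ qm ≤ qp ∧
    ∀ t > (0:ℝ), qm ≤ t * g t / YoungG g t ∧ t * g t / YoungG g t ≤ qp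

/-- Condition (g2): `t ↦ G(√t)` is convex on `[0,∞)`. -/
def CondG2 (g : ℝ → ℝ) : Prop :=
  ConvexOn ℝ (Set.Ici (0:ℝ)) (fun t => YoungG g (Real.sqrt t))

lemma convexOn_superadd {f : ℝ → ℝ} (hf : ConvexOn ℝ (Set.Ici (0:ℝ)) f)
    (h0 : f 0 = 0) {x y : ℝ} (hx : 0 ≤ x) (hy : 0 ≤ y) :
    f x + f y ≤ f (x + y) := by
  rcases eq_or_lt_of_le (add_nonneg hx hy) with hs | hs
  · have hx0 : x = 0 := by linarith
    have hy0 : y = 0 := by linarith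
    simp [hx0, hy0, h0]
  · set s := x + y with hsdef
    have h1 : f x ≤ (x / s) * f s + (y / s) * f 0 := by
      have := hf.2 (Set.mem_Ici.mpr (le_of_lt hs)) (Set.mem_Ici.mpr le_rfl)
        (div_nonneg hx hs.le) (div_nonneg hy hs.le)
        (by field_simp; exact hsdef.symm)
      simpa [smul_eq_mul, div_mul_cancel₀, hs.ne'] using this
    have h2 : f y ≤ (y / s) * f s + (x / s) * f 0 := by
      have := hf.2 (Set.mem_Ici.mpr (le_of_lt hs)) (Set.mem_Ici.mpr le_rfl)
        (div_nonneg hy hs.le) (div_nonneg hx hs.le)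
        (by rw [← add_div, add_comm, ← hsdef]; exact div_self hs.ne')
      simpa [smul_eq_mul, div_mul_cancel₀, hs.ne'] using this
    have : (x / s) * f s + (y / s) * f s = f s := by
      rw [← add_mul]; field_simp; rw [← hsdef]
    rw [h0] at h1 h2
    nlinarith

/-- Lemma 2.1: the convexity inequality
`(G(|a|) + G(|b|))/2 ≥ G(|a+b|/2) + G(|a−b|/2)`. -/
theorem statement3
    (g : ℝ → ℝ) (hg : YoungHyp g)
    (qm qp : ℝ) (hcondg : CondG g qm qp) (hg2 : CondG2 g) :
    ∀ a b : ℝ,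
      YoungG g (|a + b| / 2) + YoungG g (|a - b| / 2) ≤
        (YoungG g |a| + YoungG g |b|) / 2 := by
  intro a b
  set H := fun t => YoungG g (Real.sqrt t) with hH
  have hG0 : YoungG g 0 = 0 := by simp [YoungG]
  have hH0 : H 0 = 0 := by simp [hH, hG0]
  have key : ∀ c : ℝ, YoungG g (|c| / 2) = H (c ^ 2 / 4) := by
    intro c
    have : Real.sqrt (c ^ 2 / 4) = |c| / 2 := by
      rw [show (4:ℝ) = 2 ^ 2 by norm_num, ← div_pow, Real.sqrt_sq_eq_abs, abs_div]
      norm_num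
    simp [hH, this]
  have keya : ∀ c : ℝ, YoungG g |c| = H (c ^ 2) := by
    intro c
    simp [hH, Real.sqrt_sq_eq_abs]
  rw [key, key, keya, keya]
  have h1 : H ((a + b) ^ 2 / 4) + H ((a - b) ^ 2 / 4) ≤
      H ((a + b) ^ 2 / 4 + (a - b) ^ 2 / 4) :=
    convexOn_superadd hg2 hH0 (by positivity) (by positivity)
  have heq : (a + b) ^ 2 / 4 + (a - b) ^ 2 / 4 = (1/2) * a ^ 2 + (1/2) * b ^ 2 := by ring
  have h2 : H ((1/2 : ℝ) * a ^ 2 + (1/2) * b ^ 2) ≤ (1/2) * H (a ^ 2) + (1/2) * H (b ^ 2) := by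
    simpa [smul_eq_mul] using hg2.2 (Set.mem_Ici.mpr (sq_nonneg a)) (Set.mem_Ici.mpr (sq_nonneg b))
      (by norm_num : (0:ℝ) ≤ 1/2) (by norm_num : (0:ℝ) ≤ 1/2) (by norm_num)
  rw [heq] at h1
  linarith
end
end

section
/- Assume condition (g) with 2 ≤ q⁻ ≤ q⁺ < p for some real p > 2, condition (g2), and that G is differentiable on (0,∞) with G' = g. Let u, v : ℝ^N → ℝ be measurable with ρ(u) < ∞, ρ(v) < ∞ and u|_{B₁}, v|_{B₁} ∈ L²(B₁) ∩ L^p(B₁). Assume: (A) ρ(v) + (1/2)∫_{B₁} v² dx − ρ(u) − (1/2)∫_{B₁} u² dx ≥ ∫_{B₁} |u|^(p−2)·u·(v − u) dx; and (B) the integral ∬_Q g(|v(x)−v(y)|/|x−y|^s)·sgn(v(x)−v(y))·((v−u)(x)−(v−u)(y))·|x−y|^(−s−N) dx dy converges absolutely and ∬_Q g(|v(x)−v(y)|/|x−y|^s)·sgn(v(x)−v(y))·((v−u)(x)−(v−u)(y))·|x−y|^(−s−N) dx dy + ∫_{B₁} v·(v−u) dx = ∫_{B₁} |u|^(p−2)·u·(v−u)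 dx. Then u = v almost everywhere in B₁. -/
open MeasureTheory Set Real Filter
open scoped ENNReal

noncomputable section

/-- `ℝ^N`. -/
abbrev Euc (N : ℕ) : Type := EuclideanSpace ℝ (Fin N)

/-- The open unit ball of `ℝ^N`. -/
def B1 (N : ℕ) : Set (Euc N) := Metric.ball 0 1

/-- `Q = ℝ^{2N} \ (B₁ᶜ × B₁ᶜ)`. -/
def Qset (N : ℕ) : Set (Euc N × Euc N) := {z : Euc N × Euc N | z.1 ∈ B1 N ∨ z.2 ∈ B1 N}

/-- The modular `ρ(u) = ∬_Q G(|u(x)−u(y)|/|x−y|^s)·|x−y|^(−N) dx dy`. -/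
def rho (N : ℕ) (s : ℝ) (g : ℝ → ℝ) (u : Euc N → ℝ) : ℝ≥0∞ :=
  ∫⁻ z in Qset N,
    ENNReal.ofReal (YoungG g (|u z.1 - u z.2| / dist z.1 z.2 ^ s) * dist z.1 z.2 ^ (-(N : ℝ)))

/-- The integrand `g(|u(x)−u(y)|/|x−y|^s)·sgn(u(x)−u(y))·(φ(x)−φ(y))·|x−y|^(−s−N)`. -/
def weakKernel (N : ℕ) (s : ℝ) (g : ℝ → ℝ) (u φ : Euc N → ℝ) (z : Euc N × Euc N) : ℝ :=
  g (|u z.1 - u z.2| / dist z.1 z.2 ^ s) * Real.sign (u z.1 - u z.2) *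
    (φ z.1 - φ z.2) * dist z.1 z.2 ^ (-s - (N : ℝ))

/-- A function on `ℝ^N` is radial if its value depends only on `|x|`. -/
def IsRadial (N : ℕ) (u : Euc N → ℝ) : Prop := ∀ x y : Euc N, ‖x‖ = ‖y‖ → u x = u y

/-- `u` is a weak solution of `(−Δ_g)^s u + u = |u|^{p−2} u` in `B₁` with the nonlocal
Neumann condition, tested against all measurable radial `φ` with finite modular whose
restriction to `B₁` lies in `L² ∩ L^p`. -/
def IsWeakSolution (N : ℕ) (s p : ℝ) (g : ℝ → ℝ) (u : Euc N → ℝ) : Prop :=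
  ∀ φ : Euc N → ℝ, Measurable φ → IsRadial N φ →
    rho N s g φ < ⊤ →
    MemLp φ 2 (volume.restrict (B1 N)) →
    MemLp φ (ENNReal.ofReal p) (volume.restrict (B1 N)) →
    IntegrableOn (weakKernel N s g u φ) (Qset N) ∧
      ∫ z in Qset N, weakKernel N s g u φ z =
        ∫ x in B1 N, (|u x| ^ (p - 2) * u x - u x) * φ x

section Aux

variable {g : ℝ → ℝ}

lemma g_nonneg (hg0 : g 0 = 0) (hgmono : MonotoneOn g (Set.Ici 0))
    {t : ℝ} (ht : 0 ≤ t) : 0 ≤ g t := by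
  have := hgmono (Set.self_mem_Ici) ht ht
  simpa [hg0] using this

lemma g_intInt (hgmono : MonotoneOn g (Set.Ici 0)) {a b : ℝ} (ha : 0 ≤ a) (hb : 0 ≤ b) :
    IntervalIntegrable g volume a b := by
  apply MonotoneOn.intervalIntegrable
  apply hgmono.mono
  intro x hx
  rcases le_total a b with h | h
  · rw [Set.uIcc_of_le h] at hx; exact le_trans ha hx.1
  · rw [Set.uIcc_of_ge h] at hx; exact le_trans hb hx.1

lemma youngG_sub_eq (hgmono : MonotoneOn g (Set.Ici 0)) {a b : ℝ} (ha : 0 ≤ a) (hb : 0 ≤ b) :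
    YoungG g b - YoungG g a = ∫ t in a..b, g t := by
  unfold YoungG
  exact intervalIntegral.integral_interval_sub_left
    (g_intInt hgmono le_rfl hb) (g_intInt hgmono le_rfl ha)

/-- Convexity-type inequality: `G(b) - G(a) ≤ g(b)(b - a)` for `a, b ≥ 0`. -/
lemma youngG_convex_ineq (hgmono : MonotoneOn g (Set.Ici 0))
    {a b : ℝ} (ha : 0 ≤ a) (hb : 0 ≤ b) :
    YoungG g b - YoungG g a ≤ g b * (b - a) := by
  rw [youngG_sub_eq hgmono ha hb]
  rcases le_total a b with h | h
  · have : ∫ t in a..b, g t ≤ ∫ _t in a..b, g b := by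
      apply intervalIntegral.integral_mono_on h (g_intInt hgmono ha hb)
        intervalIntegrable_const
      intro x hx
      exact hgmono (le_trans ha hx.1) (le_trans ha (le_trans hx.1 hx.2)) hx.2
    simpa [mul_comm] using this
  · have h1 : ∫ t in b..a, g t ≥ ∫ _t in b..a, g b := by
      apply intervalIntegral.integral_mono_on h intervalIntegrable_const
        (g_intInt hgmono hb ha)
      intro x hx
      exact hgmono hb (le_trans hb hx.1) hx.1
    rw [intervalIntegral.integral_symm b a]
    simp only [intervalIntegral.integral_const, smul_eq_mul] at h1 ⊢
    nlinarith [h1]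

lemma youngG_nonneg (hg0 : g 0 = 0) (hgmono : MonotoneOn g (Set.Ici 0))
    {t : ℝ} (ht : 0 ≤ t) : 0 ≤ YoungG g t := by
  have h := youngG_sub_eq hgmono le_rfl ht
  have h0 : YoungG g 0 = 0 := by simp [YoungG]
  rw [h0, sub_zero] at h
  rw [h]
  apply intervalIntegral.integral_nonneg ht
  intro x hx
  exact g_nonneg hg0 hgmono hx.1

lemma youngG_monoOn (hg0 : g 0 = 0) (hgmono : MonotoneOn g (Set.Ici 0)) :
    MonotoneOn (YoungG g) (Set.Ici 0) := by
  intro a ha b hb hab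
  have h := youngG_sub_eq hgmono ha hb
  have : (0:ℝ) ≤ ∫ t in a..b, g t := by
    apply intervalIntegral.integral_nonneg hab
    intro x hx
    exact g_nonneg hg0 hgmono (le_trans ha hx.1)
  linarith [h, this]

lemma rsign_mul_self (t : ℝ) : Real.sign t * t = |t| := by
  rcases lt_trichotomy t 0 with h | h | h
  · rw [Real.sign_of_neg h, abs_of_neg h]; ring
  · simp [h]
  · rw [Real.sign_of_pos h, abs_of_pos h]; ring

lemma rsign_mul_le_abs (t x : ℝ) : Real.sign t * x ≤ |x| := by
  rcases lt_trichotomy t 0 with h | h | h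
  · rw [Real.sign_of_neg h]; rw [neg_one_mul]; exact neg_le_abs x
  · simp [h, abs_nonneg]
  · rw [Real.sign_of_pos h, one_mul]; exact le_abs_self x

end Aux

/-- core of Theorem 3.1: if `u` satisfies the critical-point
inequality (A) and `v` solves the linearized problem (B), then `u = v` a.e. in `B₁`. -/
theorem statement11
    (N : ℕ) (hN : 2 ≤ N) (s : ℝ) (hs : s ∈ Set.Ioo (0:ℝ) 1)
    (g : ℝ → ℝ) (hg : YoungHyp g)
    (p qm qp : ℝ) (hcondg : CondG g qm qp)
    (hqm : 2 ≤ qm) (hqmqp : qm ≤ qp) (hqpp : qp < p) (hp : 2 < p)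
    (hg2 : CondG2 g)
    (hderiv : ∀ t > (0:ℝ), HasDerivAt (YoungG g) (g t) t)
    (u v : Euc N → ℝ) (hu : Measurable u) (hv : Measurable v)
    (hru : rho N s g u < ⊤) (hrv : rho N s g v < ⊤)
    (huL2 : MemLp u 2 (volume.restrict (B1 N)))
    (huLp : MemLp u (ENNReal.ofReal p) (volume.restrict (B1 N)))
    (hvL2 : MemLp v 2 (volume.restrict (B1 N)))
    (hvLp : MemLp v (ENNReal.ofReal p) (volume.restrict (B1 N)))
    (hA : (∫ x in B1 N, |u x| ^ (p - 2) * u x * (v x - u x)) ≤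
      (rho N s g v).toReal + (1/2) * (∫ x in B1 N, (v x) ^ 2) -
        (rho N s g u).toReal - (1/2) * (∫ x in B1 N, (u x) ^ 2))
    (hBint : IntegrableOn (weakKernel N s g v (fun x => v x - u x)) (Qset N))
    (hB : (∫ z in Qset N, weakKernel N s g v (fun x => v x - u x) z) +
        (∫ x in B1 N, v x * (v x - u x)) =
      ∫ x in B1 N, |u x| ^ (p - 2) * u x * (v x - u x)) :
    ∀ᵐ x ∂(volume.restrict (B1 N)), u x = v x := by
  obtain ⟨hg0, hgpos, hgmono, -, -⟩ := hg
  set μQ := volume.restrict (Qset N) with hμQ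
  set μB := volume.restrict (B1 N) with hμB
  -- the two modular integrands
  set hU : Euc N × Euc N → ℝ := fun z =>
    YoungG g (|u z.1 - u z.2| / dist z.1 z.2 ^ s) * dist z.1 z.2 ^ (-(N : ℝ)) with hUdef
  set hV : Euc N × Euc N → ℝ := fun z =>
    YoungG g (|v z.1 - v z.2| / dist z.1 z.2 ^ s) * dist z.1 z.2 ^ (-(N : ℝ)) with hVdef
  have hsne : s ≠ 0 := ne_of_gt hs.1
  have hNpos : (0:ℝ) < (N:ℝ) := by
    have : (2:ℝ) ≤ (N:ℝ) := by exact_mod_cast hN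
    linarith
  have hNne : -(N : ℝ) ≠ 0 := by linarith
  have hsNne : -s - (N:ℝ) ≠ 0 := by linarith [hs.1]
  -- nonnegativity of the modular integrands
  have hargnn : ∀ (w : Euc N → ℝ) (z : Euc N × Euc N),
      0 ≤ |w z.1 - w z.2| / dist z.1 z.2 ^ s := fun w z =>
    div_nonneg (abs_nonneg _) (Real.rpow_nonneg dist_nonneg _)
  have hUnn : ∀ z, 0 ≤ hU z := fun z =>
    mul_nonneg (youngG_nonneg hg0 hgmono (hargnn u z)) (Real.rpow_nonneg dist_nonneg _)
  have hVnn : ∀ z, 0 ≤ hV z := fun z =>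
    mul_nonneg (youngG_nonneg hg0 hgmono (hargnn v z)) (Real.rpow_nonneg dist_nonneg _)
  -- measurability of the modular integrands
  have hGm : Measurable (fun t : ℝ => YoungG g (max t 0)) := by
    apply Monotone.measurable
    intro a b hab
    exact youngG_monoOn hg0 hgmono (le_max_right a 0) (le_max_right b 0)
      (max_le_max hab le_rfl)
  have hdistm : Measurable (fun z : Euc N × Euc N => dist z.1 z.2) := measurable_dist
  have hmeasmod : ∀ (w : Euc N → ℝ), Measurable w → Measurable (fun z : Euc N × Euc N =>
      YoungG g (|w z.1 - w z.2| / dist z.1 z.2 ^ s) * dist z.1 z.2 ^ (-(N : ℝ))) := by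
    intro w hw
    have harg : Measurable (fun z : Euc N × Euc N => |w z.1 - w z.2| / dist z.1 z.2 ^ s) :=
      ((hw.comp measurable_fst).sub (hw.comp measurable_snd)).abs.div
        (hdistm.pow measurable_const)
    have h1 : Measurable (fun z : Euc N × Euc N =>
        YoungG g (|w z.1 - w z.2| / dist z.1 z.2 ^ s)) := by
      have : (fun z : Euc N × Euc N => YoungG g (|w z.1 - w z.2| / dist z.1 z.2 ^ s)) =
          (fun t : ℝ => YoungG g (max t 0)) ∘
            (fun z : Euc N × Euc N => |w z.1 - w z.2| / dist z.1 z.2 ^ s) := by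
        funext z
        simp [Function.comp, max_eq_left (hargnn w z)]
      rw [this]
      exact hGm.comp harg
    exact h1.mul (hdistm.pow measurable_const)
  have hUm : Measurable hU := hmeasmod u hu
  have hVm : Measurable hV := hmeasmod v hv
  -- integrability and the toReal identities
  have hUint : Integrable hU μQ := by
    refine ⟨hUm.aestronglyMeasurable, ?_⟩
    rw [hasFiniteIntegral_iff_ofReal (Filter.Eventually.of_forall hUnn)]
    exact hru
  have hVint : Integrable hV μQ := by
    refine ⟨hVm.aestronglyMeasurable, ?_⟩
    rw [hasFiniteIntegral_iff_ofReal (Filter.Eventually.of_forall hVnn)]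
    exact hrv
  have hUeq : (rho N s g u).toReal = ∫ z, hU z ∂μQ := by
    rw [integral_eq_lintegral_of_nonneg_ae (Filter.Eventually.of_forall hUnn)
      hUm.aestronglyMeasurable]
    rfl
  have hVeq : (rho N s g v).toReal = ∫ z, hV z ∂μQ := by
    rw [integral_eq_lintegral_of_nonneg_ae (Filter.Eventually.of_forall hVnn)
      hVm.aestronglyMeasurable]
    rfl
  -- the pointwise convexity inequality
  have hptwise : ∀ z, hV z - hU z ≤ weakKernel N s g v (fun x => v x - u x) z := by
    intro z
    set d := dist z.1 z.2 with hd
    rcases eq_or_lt_of_le (dist_nonneg : 0 ≤ d) with hd0 | hdpos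
    · -- d = 0 case: everything vanishes
      have hd0' : dist z.1 z.2 = 0 := hd0.symm
      simp [hUdef, hVdef, weakKernel, hd0', Real.zero_rpow hNne, Real.zero_rpow hsNne, zero_pow (by omega : N ≠ 0)]
    · set Du := u z.1 - u z.2 with hDu
      set Dv := v z.1 - v z.2 with hDv
      set ds := d ^ s with hds
      have hdspos : 0 < ds := Real.rpow_pos_of_pos hdpos s
      set A := |Du| / ds with hA'
      set B := |Dv| / ds with hB'
      have hAnn : 0 ≤ A := div_nonneg (abs_nonneg _) hdspos.le
      have hBnn : 0 ≤ B := div_nonneg (abs_nonneg _) hdspos.le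
      have hgBnn : 0 ≤ g B := g_nonneg hg0 hgmono hBnn
      have step1 : YoungG g B - YoungG g A ≤ g B * (B - A) :=
        youngG_convex_ineq hgmono hAnn hBnn
      have hsgn1 : Real.sign Dv * Dv = |Dv| := rsign_mul_self Dv
      have hsgn2 : Real.sign Dv * Du ≤ |Du| := rsign_mul_le_abs Dv Du
      have hnum : |Dv| - |Du| ≤ Real.sign Dv * (Dv - Du) := by nlinarith [hsgn1, hsgn2]
      have step2 : g B * (B - A) ≤ g B * (Real.sign Dv * (Dv - Du) / ds) := by
        apply mul_le_mul_of_nonneg_left _ hgBnn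
        have hBA : B - A = (|Dv| - |Du|) / ds := by rw [hA', hB', sub_div]
        rw [hBA]
        gcongr
      have step3 : YoungG g B - YoungG g A ≤ g B * (Real.sign Dv * (Dv - Du) / ds) :=
        step1.trans step2
      have hdN : (0:ℝ) ≤ d ^ (-(N:ℝ)) := Real.rpow_nonneg hdpos.le _
      have hkey := mul_le_mul_of_nonneg_right step3 hdN
      have hrw : d ^ (-s - (N:ℝ)) = ds⁻¹ * d ^ (-(N:ℝ)) := by
        rw [hds, ← Real.rpow_neg hdpos.le, ← Real.rpow_add hdpos]
        ring_nf
        rfl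
      calc hV z - hU z = (YoungG g B - YoungG g A) * d ^ (-(N:ℝ)) := by
            simp only [hUdef, hVdef, ← hd, ← hds, ← hA', ← hB', ← hDu, ← hDv]
            ring
        _ ≤ g B * (Real.sign Dv * (Dv - Du) / ds) * d ^ (-(N:ℝ)) := hkey
        _ = weakKernel N s g v (fun x => v x - u x) z := by
            simp only [weakKernel, ← hd, ← hds, ← hB', ← hDu, ← hDv, hrw]
            rw [div_eq_mul_inv]
            ring
  -- integral comparison
  have hWKint : Integrable (weakKernel N s g v (fun x => v x - u x)) μQ := hBint
  have hmono : ∫ z, (hV z - hU z) ∂μQ ≤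
      ∫ z, weakKernel N s g v (fun x => v x - u x) z ∂μQ :=
    integral_mono (hVint.sub hUint) hWKint hptwise
  have hEdiff : (rho N s g v).toReal - (rho N s g u).toReal ≤
      ∫ z in Qset N, weakKernel N s g v (fun x => v x - u x) z := by
    rw [hVeq, hUeq, ← integral_sub hVint hUint]
    exact hmono
  -- integrability of products over B1
  have hone : (1 : ℝ≥0∞) / 1 = 1 / 2 + 1 / 2 := by
    simp [ENNReal.inv_two_add_inv_two]
  have hmulint : ∀ (f h : Euc N → ℝ), MemLp f 2 μB → MemLp h 2 μB →
      Integrable (fun x => f x * h x) μB := by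
    intro f h hf hh
    have := (hh.smul hf (hpqr := ⟨by simpa using hone.symm⟩) : MemLp (f • h) 1 μB)
    rw [memLp_one_iff_integrable] at this
    exact this
  have Iuu : Integrable (fun x => u x * u x) μB := hmulint u u huL2 huL2
  have Ivv : Integrable (fun x => v x * v x) μB := hmulint v v hvL2 hvL2
  have Iuv : Integrable (fun x => u x * v x) μB := hmulint u v huL2 hvL2
  have Ivu : Integrable (fun x => v x * u x) μB := hmulint v u hvL2 huL2
  -- rewrite the B1-integrals
  have hv2 : (∫ x in B1 N, (v x) ^ 2) = ∫ x, v x * v x ∂μB := by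
    apply integral_congr_ae; filter_upwards with x; ring
  have hu2 : (∫ x in B1 N, (u x) ^ 2) = ∫ x, u x * u x ∂μB := by
    apply integral_congr_ae; filter_upwards with x; ring
  have hvvu : (∫ x in B1 N, v x * (v x - u x)) =
      (∫ x, v x * v x ∂μB) - ∫ x, v x * u x ∂μB := by
    rw [← integral_sub Ivv Ivu]
    apply integral_congr_ae; filter_upwards with x; ring
  have hvu_uv : (∫ x, v x * u x ∂μB) = ∫ x, u x * v x ∂μB := by
    apply integral_congr_ae; filter_upwards with x; ring
  -- the squared difference
  have Isq : Integrable (fun x => (u x - v x) * (u x - v x)) μB := by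
    have : Integrable (fun x => u x * u x - u x * v x - v x * u x + v x * v x) μB :=
      ((Iuu.sub Iuv).sub Ivu).add Ivv
    apply this.congr
    filter_upwards with x; ring
  have hsq_expand : (∫ x, (u x - v x) * (u x - v x) ∂μB) =
      (∫ x, u x * u x ∂μB) - (∫ x, u x * v x ∂μB) - (∫ x, v x * u x ∂μB) +
        ∫ x, v x * v x ∂μB := by
    have I1 : Integrable (fun x => u x * u x - u x * v x) μB := Iuu.sub Iuv
    have I2 : Integrable (fun x => u x * u x - u x * v x - v x * u x) μB := I1.sub Ivu
    have e3 : (∫ x, (u x * u x - u x * v x - v x * u x + v x * v x) ∂μB) =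
        (∫ x, (u x * u x - u x * v x - v x * u x) ∂μB) + ∫ x, v x * v x ∂μB :=
      integral_add I2 Ivv
    have e2 : (∫ x, (u x * u x - u x * v x - v x * u x) ∂μB) =
        (∫ x, (u x * u x - u x * v x) ∂μB) - ∫ x, v x * u x ∂μB := integral_sub I1 Ivu
    have e1 : (∫ x, (u x * u x - u x * v x) ∂μB) =
        (∫ x, u x * u x ∂μB) - ∫ x, u x * v x ∂μB := integral_sub Iuu Iuv
    have e0 : (∫ x, (u x - v x) * (u x - v x) ∂μB) =
        ∫ x, (u x * u x - u x * v x - v x * u x + v x * v x) ∂μB := by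
      apply integral_congr_ae; filter_upwards with x; ring
    rw [e0, e3, e2, e1]
  -- combine everything
  have hfinal : (∫ x, (u x - v x) * (u x - v x) ∂μB) ≤ 0 := by
    rw [hsq_expand, hvu_uv]
    rw [hvvu, hvu_uv] at hB
    rw [hv2, hu2] at hA
    linarith [hEdiff, hB, hA]
  have hnonneg : (0:ℝ) ≤ ∫ x, (u x - v x) * (u x - v x) ∂μB :=
    integral_nonneg fun x => mul_self_nonneg _
  have hzero : (∫ x, (u x - v x) * (u x - v x) ∂μB) = 0 := le_antisymm hfinal hnonneg
  have := (integral_eq_zero_iff_of_nonneg (fun x => mul_self_nonneg (u x - v x)) Isq).mp hzero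
  filter_upwards [this] with x hx
  have : (u x - v x) * (u x - v x) = 0 := hx
  have := mul_self_eq_zero.mp this
  linarith
end
end

section
/- Assume condition (g) and condition (g2). Then for all measurable u, v : ℝ^N → ℝ: ρ((u+v)/2) + ρ((u−v)/2) ≤ (ρ(u) + ρ(v))/2 (as an inequality of values in [0,∞]). -/
open MeasureTheory Set Real Filter
open scoped ENNReal

noncomputable section

section Aux

lemma youngG_zero (g : ℝ → ℝ) : YoungG g 0 = 0 := intervalIntegral.integral_same

lemma youngG_nonneg_s16 (g : ℝ → ℝ) (hg : YoungHyp g) {t : ℝ} (ht : 0 ≤ t) :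
    0 ≤ YoungG g t := by
  apply intervalIntegral.integral_nonneg ht
  intro τ hτ
  have h0 : g 0 = 0 := hg.1
  have := hg.2.2.1 (Set.mem_Ici.2 le_rfl) (Set.mem_Ici.2 hτ.1) hτ.1
  linarith

lemma convex_le_scale {H : ℝ → ℝ} (hH : ConvexOn ℝ (Set.Ici (0:ℝ)) H) (hH0 : H 0 = 0)
    {p q : ℝ} (hp : 0 ≤ p) (hpq : p ≤ q) (hq : 0 < q) : H p ≤ (p / q) * H q := by
  have hle : p / q ≤ 1 := (div_le_one hq).2 hpq
  have ha : (0:ℝ) ≤ p / q := by positivity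
  have hb : (0:ℝ) ≤ 1 - p / q := by linarith
  have hab : p / q + (1 - p / q) = 1 := by ring
  have h := hH.2 (Set.mem_Ici.2 hq.le) (Set.mem_Ici.2 le_rfl) ha hb hab
  have harg : (p / q) • q + (1 - p / q) • (0:ℝ) = p := by
    simp [smul_eq_mul, div_mul_cancel₀, hq.ne']
  rw [harg] at h
  simpa [hH0, smul_eq_mul] using h

/-- Key pointwise inequality from condition (g2). -/
lemma key_ineq (g : ℝ → ℝ) (hg : YoungHyp g) (hg2 : CondG2 g) (a b : ℝ) :
    YoungG g |(a + b) / 2| + YoungG g |(a - b) / 2| ≤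
      (YoungG g |a| + YoungG g |b|) / 2 := by
  set H : ℝ → ℝ := fun t => YoungG g (Real.sqrt t) with hHdef
  have hH0 : H 0 = 0 := by simp [hHdef, youngG_zero]
  have hrep : ∀ x : ℝ, YoungG g |x| = H (x ^ 2) := by
    intro x; simp [hHdef, Real.sqrt_sq_eq_abs]
  have hsup : ∀ p q : ℝ, 0 ≤ p → 0 ≤ q → H p + H q ≤ H (p + q) := by
    intro p q hp hq
    rcases eq_or_lt_of_le (by positivity : (0:ℝ) ≤ p + q) with h | h
    · have hp0 : p = 0 := by linarith
      have hq0 : q = 0 := by linarith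
      simp [hp0, hq0, hH0]
    · have h1 : H p ≤ (p / (p + q)) * H (p + q) :=
        convex_le_scale hg2 hH0 hp (by linarith) h
      have h2 : H q ≤ (q / (p + q)) * H (p + q) :=
        convex_le_scale hg2 hH0 hq (by linarith) h
      have : (p / (p + q)) * H (p + q) + (q / (p + q)) * H (p + q) = H (p + q) := by
        field_simp
      linarith
  have hmid : H ((a ^ 2 + b ^ 2) / 2) ≤ (H (a ^ 2) + H (b ^ 2)) / 2 := by
    have hw : (0:ℝ) ≤ (1:ℝ)/2 := by norm_num
    have hww : (1:ℝ)/2 + 1/2 = 1 := by norm_num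
    have h := hg2.2 (Set.mem_Ici.2 (by positivity : (0:ℝ) ≤ a ^ 2))
      (Set.mem_Ici.2 (by positivity : (0:ℝ) ≤ b ^ 2)) hw hw hww
    have harg : ((1:ℝ)/2) • (a ^ 2) + ((1:ℝ)/2) • (b ^ 2) = (a ^ 2 + b ^ 2) / 2 := by
      simp [smul_eq_mul]; ring
    rw [harg] at h
    simp only [smul_eq_mul] at h
    change H _ ≤ 1 / 2 * H _ + 1 / 2 * H _ at h
    linarith
  have hsum : ((a + b) / 2) ^ 2 + ((a - b) / 2) ^ 2 = (a ^ 2 + b ^ 2) / 2 := by ring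
  have h1 := hsup (((a + b) / 2) ^ 2) (((a - b) / 2) ^ 2) (by positivity) (by positivity)
  rw [hsum] at h1
  rw [hrep, hrep, hrep, hrep]
  linarith

lemma youngG_monotoneOn (g : ℝ → ℝ) (hg : YoungHyp g) (hg2 : CondG2 g) :
    MonotoneOn (YoungG g) (Set.Ici (0:ℝ)) := by
  set H : ℝ → ℝ := fun t => YoungG g (Real.sqrt t) with hHdef
  have hH0 : H 0 = 0 := by simp [hHdef, youngG_zero]
  intro x hx y hy hxy
  rcases eq_or_lt_of_le hxy with h | h
  · exact le_of_eq (by rw [h])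
  · have hy0 : 0 < y := lt_of_le_of_lt hx h
    have hx0 : (0:ℝ) ≤ x := hx
    have hsq : x ^ 2 ≤ y ^ 2 := by nlinarith
    have h1 : H (x ^ 2) ≤ (x ^ 2 / y ^ 2) * H (y ^ 2) :=
      convex_le_scale hg2 hH0 (by positivity) hsq (by positivity)
    have hHy : 0 ≤ H (y ^ 2) := by
      simpa [hHdef] using youngG_nonneg_s16 g hg (Real.sqrt_nonneg (y ^ 2))
    have hfrac : x ^ 2 / y ^ 2 ≤ 1 := by
      rw [div_le_one (by positivity)]; exact hsq
    have h2 : (x ^ 2 / y ^ 2) * H (y ^ 2) ≤ H (y ^ 2) := by nlinarith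
    have hrx : YoungG g x = H (x ^ 2) := by
      simp [hHdef, Real.sqrt_sq_eq_abs, abs_of_nonneg hx0]
    have hry : YoungG g y = H (y ^ 2) := by
      simp [hHdef, Real.sqrt_sq_eq_abs, abs_of_nonneg hy0.le]
    rw [hrx, hry]; linarith

lemma rho_integrand_measurable (N : ℕ) (s : ℝ) (g : ℝ → ℝ) (hg : YoungHyp g)
    (hg2 : CondG2 g) (w : Euc N → ℝ) (hw : Measurable w) :
    Measurable (fun z : Euc N × Euc N =>
      ENNReal.ofReal (YoungG g (|w z.1 - w z.2| / dist z.1 z.2 ^ s) *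
        dist z.1 z.2 ^ (-(N : ℝ)))) := by
  have hG' : Monotone (fun t : ℝ => YoungG g (max t 0)) := by
    intro x y hxy
    exact youngG_monotoneOn g hg hg2 (Set.mem_Ici.2 (le_max_right _ _))
      (Set.mem_Ici.2 (le_max_right _ _)) (max_le_max hxy le_rfl)
  have hGmeas : Measurable (fun t : ℝ => YoungG g (max t 0)) := hG'.measurable
  have ht : Measurable (fun z : Euc N × Euc N => |w z.1 - w z.2| / dist z.1 z.2 ^ s) :=
    ((hw.comp measurable_fst).sub (hw.comp measurable_snd)).abs.div
      ((measurable_fst.dist measurable_snd).pow measurable_const)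
  have hc : Measurable (fun z : Euc N × Euc N => dist z.1 z.2 ^ (-(N : ℝ))) :=
    (measurable_fst.dist measurable_snd).pow measurable_const
  have heq : (fun z : Euc N × Euc N =>
      YoungG g (|w z.1 - w z.2| / dist z.1 z.2 ^ s)) =
      (fun z => (fun t : ℝ => YoungG g (max t 0)) (|w z.1 - w z.2| / dist z.1 z.2 ^ s)) := by
    funext z
    have hnn : 0 ≤ |w z.1 - w z.2| / dist z.1 z.2 ^ s :=
      div_nonneg (abs_nonneg _) (Real.rpow_nonneg dist_nonneg _)
    simp [max_eq_left hnn]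
  exact (((heq ▸ (hGmeas.comp ht)) : Measurable _).mul hc).ennreal_ofReal

end Aux

/-- modular parallelogram-type inequality, from Lemma 2.1:
`ρ((u+v)/2) + ρ((u−v)/2) ≤ (ρ(u) + ρ(v))/2` in `[0,∞]`. -/
theorem statement16
    (N : ℕ) (hN : 2 ≤ N) (s : ℝ) (hs : s ∈ Set.Ioo (0:ℝ) 1)
    (g : ℝ → ℝ) (hg : YoungHyp g)
    (qm qp : ℝ) (hcondg : CondG g qm qp) (hg2 : CondG2 g) :
    ∀ u v : Euc N → ℝ, Measurable u → Measurable v →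
      rho N s g (fun x => (u x + v x) / 2) + rho N s g (fun x => (u x - v x) / 2) ≤
        (rho N s g u + rho N s g v) / 2 := by
  intro u v hu hv
  set F : (Euc N → ℝ) → (Euc N × Euc N) → ℝ≥0∞ := fun w z =>
    ENNReal.ofReal (YoungG g (|w z.1 - w z.2| / dist z.1 z.2 ^ s) *
      dist z.1 z.2 ^ (-(N : ℝ))) with hF
  have hw1 : Measurable (fun x => (u x + v x) / 2) := (hu.add hv).div_const 2
  have hmF : ∀ w : Euc N → ℝ, Measurable w → Measurable (F w) := fun w hw =>
    rho_integrand_measurable N s g hg hg2 w hw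
  -- pointwise inequality
  have hpt : ∀ z : Euc N × Euc N,
      F (fun x => (u x + v x) / 2) z + F (fun x => (u x - v x) / 2) z ≤
        (F u z + F v z) / 2 := by
    intro z
    set d : ℝ := dist z.1 z.2 ^ s with hd
    set c : ℝ := dist z.1 z.2 ^ (-(N : ℝ)) with hcdef
    have hc : 0 ≤ c := Real.rpow_nonneg dist_nonneg _
    have hd0 : 0 ≤ d := Real.rpow_nonneg dist_nonneg _
    -- the real inequality on YoungG values
    have hreal : YoungG g (|(u z.1 + v z.1) / 2 - (u z.2 + v z.2) / 2| / d) +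
        YoungG g (|(u z.1 - v z.1) / 2 - (u z.2 - v z.2) / 2| / d) ≤
        (YoungG g (|u z.1 - u z.2| / d) + YoungG g (|v z.1 - v z.2| / d)) / 2 := by
      rcases eq_or_lt_of_le hd0 with h0 | h0
      · simp [← h0, div_zero, youngG_zero]
      · have hdne : d ≠ 0 := ne_of_gt h0
        have main := key_ineq g hg hg2 ((u z.1 - u z.2) / d) ((v z.1 - v z.2) / d)
        have E1 : |((u z.1 - u z.2) / d + (v z.1 - v z.2) / d) / 2| =
            |(u z.1 + v z.1) / 2 - (u z.2 + v z.2) / 2| / d := by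
          rw [show ((u z.1 - u z.2) / d + (v z.1 - v z.2) / d) / 2 =
              ((u z.1 + v z.1) / 2 - (u z.2 + v z.2) / 2) / d from by
            field_simp; ring]
          rw [abs_div, abs_of_pos h0]
        have E2 : |((u z.1 - u z.2) / d - (v z.1 - v z.2) / d) / 2| =
            |(u z.1 - v z.1) / 2 - (u z.2 - v z.2) / 2| / d := by
          rw [show ((u z.1 - u z.2) / d - (v z.1 - v z.2) / d) / 2 =
              ((u z.1 - v z.1) / 2 - (u z.2 - v z.2) / 2) / d from by
            field_simp; ring]
          rw [abs_div, abs_of_pos h0]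
        have E3 : |(u z.1 - u z.2) / d| = |u z.1 - u z.2| / d := by
          rw [abs_div, abs_of_pos h0]
        have E4 : |(v z.1 - v z.2) / d| = |v z.1 - v z.2| / d := by
          rw [abs_div, abs_of_pos h0]
        rw [E1, E2, E3, E4] at main
        exact main
    -- nonnegativity of the four YoungG values
    have hn : ∀ w : Euc N → ℝ, 0 ≤ YoungG g (|w z.1 - w z.2| / d) := fun w =>
      youngG_nonneg_s16 g hg (div_nonneg (abs_nonneg _) hd0)
    have hmul : YoungG g (|(u z.1 + v z.1) / 2 - (u z.2 + v z.2) / 2| / d) * c +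
        YoungG g (|(u z.1 - v z.1) / 2 - (u z.2 - v z.2) / 2| / d) * c ≤
        (YoungG g (|u z.1 - u z.2| / d) * c + YoungG g (|v z.1 - v z.2| / d) * c) / 2 := by
      have := mul_le_mul_of_nonneg_right hreal hc
      nlinarith [this]
    have hnn1 : 0 ≤ YoungG g (|(u z.1 + v z.1) / 2 - (u z.2 + v z.2) / 2| / d) * c :=
      mul_nonneg (youngG_nonneg_s16 g hg (div_nonneg (abs_nonneg _) hd0)) hc
    have hnn2 : 0 ≤ YoungG g (|(u z.1 - v z.1) / 2 - (u z.2 - v z.2) / 2| / d) * c :=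
      mul_nonneg (youngG_nonneg_s16 g hg (div_nonneg (abs_nonneg _) hd0)) hc
    have hnnu : 0 ≤ YoungG g (|u z.1 - u z.2| / d) * c := mul_nonneg (hn u) hc
    have hnnv : 0 ≤ YoungG g (|v z.1 - v z.2| / d) * c := mul_nonneg (hn v) hc
    calc F (fun x => (u x + v x) / 2) z + F (fun x => (u x - v x) / 2) z
        = ENNReal.ofReal
            (YoungG g (|(u z.1 + v z.1) / 2 - (u z.2 + v z.2) / 2| / d) * c +
             YoungG g (|(u z.1 - v z.1) / 2 - (u z.2 - v z.2) / 2| / d) * c) := by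
          rw [hF]; exact (ENNReal.ofReal_add hnn1 hnn2).symm
      _ ≤ ENNReal.ofReal
            ((YoungG g (|u z.1 - u z.2| / d) * c + YoungG g (|v z.1 - v z.2| / d) * c) / 2) :=
          ENNReal.ofReal_le_ofReal hmul
      _ = (F u z + F v z) / 2 := by
          rw [ENNReal.ofReal_div_of_pos (by norm_num : (0:ℝ) < 2),
            ENNReal.ofReal_add hnnu hnnv]
          rw [ENNReal.ofReal_ofNat]
  -- assemble
  have hdiv : ∀ f : (Euc N × Euc N) → ℝ≥0∞,
      (∫⁻ z in Qset N, f z / 2) = (∫⁻ z in Qset N, f z) / 2 := by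
    intro f
    simp only [div_eq_mul_inv]
    exact lintegral_mul_const' 2⁻¹ f (by simp)
  calc rho N s g (fun x => (u x + v x) / 2) + rho N s g (fun x => (u x - v x) / 2)
      = ∫⁻ z in Qset N,
          (F (fun x => (u x + v x) / 2) z + F (fun x => (u x - v x) / 2) z) :=
        (lintegral_add_left (hmF _ hw1) _).symm
    _ ≤ ∫⁻ z in Qset N, (F u z + F v z) / 2 := lintegral_mono hpt
    _ = (∫⁻ z in Qset N, (F u z + F v z)) / 2 := hdiv _
    _ = (rho N s g u + rho N s g v) / 2 := by
        rw [lintegral_add_left (hmF u hu)]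
        rfl
end
end

section
/- Let v : ℝ^N → ℝ be measurable with v|_{B₁} ∈ L²(B₁), let f ∈ L²(B₁) with f ≥ 0 almost everywhere in B₁, and write v⁻(x) = max{−v(x), 0}. Assume that the integral ∬_Q g(|v(x)−v(y)|/|x−y|^s)·sgn(v(x)−v(y))·(v⁻(x)−v⁻(y))·|x−y|^(−s−N) dx dy converges absolutely and that ∬_Q g(|v(x)−v(y)|/|x−y|^s)·sgn(v(x)−v(y))·(v⁻(x)−v⁻(y))·|x−y|^(−s−N) dx dy + ∫_{B₁} v·v⁻ dx = ∫_{B₁} f·v⁻ dx. Then v ≥ 0 almost everywhere in B₁. -/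
open MeasureTheory Set Real Filter
open scoped ENNReal

noncomputable section

/-- nonnegativity step in Lemma 3.7: testing the weak
formulation with the negative part `v⁻` forces `v ≥ 0` a.e. in `B₁`. -/
theorem statement17
    (N : ℕ) (hN : 2 ≤ N) (s : ℝ) (hs : s ∈ Set.Ioo (0:ℝ) 1)
    (g : ℝ → ℝ) (hg0 : g 0 = 0) (hgpos : ∀ t > (0:ℝ), 0 < g t)
    (v : Euc N → ℝ) (hv : Measurable v)
    (hvL2 : MemLp v 2 (volume.restrict (B1 N)))
    (f : Euc N → ℝ) (hf : Measurable f)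
    (hfL2 : MemLp f 2 (volume.restrict (B1 N)))
    (hfpos : ∀ᵐ x ∂(volume.restrict (B1 N)), 0 ≤ f x)
    (hint : IntegrableOn
      (weakKernel N s g v (fun x => max (-v x) 0)) (Qset N))
    (heq : (∫ z in Qset N, weakKernel N s g v (fun x => max (-v x) 0) z) +
        (∫ x in B1 N, v x * max (-v x) 0) =
      ∫ x in B1 N, f x * max (-v x) 0) :
    ∀ᵐ x ∂(volume.restrict (B1 N)), 0 ≤ v x := by
  set μ := volume.restrict (B1 N)
  set w : Euc N → ℝ := fun x => max (-v x) 0 with hw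
  -- the kernel integrand is pointwise nonpositive
  have hker : ∀ z : Euc N × Euc N, weakKernel N s g v w z ≤ 0 := by
    intro z
    unfold weakKernel
    have hd : (0:ℝ) ≤ dist z.1 z.2 ^ (-s - (N:ℝ)) :=
      Real.rpow_nonneg dist_nonneg _
    have hgnn : 0 ≤ g (|v z.1 - v z.2| / dist z.1 z.2 ^ s) := by
      rcases eq_or_lt_of_le (by positivity : (0:ℝ) ≤ |v z.1 - v z.2| / dist z.1 z.2 ^ s) with h | h
      · rw [← h, hg0]
      · exact (hgpos _ h).le
    have hsign : Real.sign (v z.1 - v z.2) * (w z.1 - w z.2) ≤ 0 := by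
      rcases lt_trichotomy (v z.1 - v z.2) 0 with h | h | h
      · rw [Real.sign_of_neg h]
        have : w z.1 ≥ w z.2 := max_le_max (by linarith) le_rfl
        nlinarith
      · rw [h, Real.sign_zero]; simp
      · rw [Real.sign_of_pos h]
        have : w z.1 ≤ w z.2 := max_le_max (by linarith) le_rfl
        nlinarith
    calc g (|v z.1 - v z.2| / dist z.1 z.2 ^ s) * Real.sign (v z.1 - v z.2) *
          (w z.1 - w z.2) * dist z.1 z.2 ^ (-s - (N:ℝ))
        = (g (|v z.1 - v z.2| / dist z.1 z.2 ^ s) *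
            (Real.sign (v z.1 - v z.2) * (w z.1 - w z.2))) *
            dist z.1 z.2 ^ (-s - (N:ℝ)) := by ring
      _ ≤ 0 := mul_nonpos_of_nonpos_of_nonneg
            (mul_nonpos_of_nonneg_of_nonpos hgnn hsign) hd
  have hKint : (∫ z in Qset N, weakKernel N s g v w z) ≤ 0 :=
    integral_nonpos fun z => hker z
  -- w is in L²
  have hwL2 : MemLp w 2 μ := by
    refine MemLp.of_le hvL2 ?_ ?_
    · exact ((hv.neg.max measurable_const)).aestronglyMeasurable
    · refine Filter.Eventually.of_forall fun x => ?_
      simp only [hw, Real.norm_eq_abs]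
      rcases le_or_gt (v x) 0 with h | h
      · rw [max_eq_left (by linarith), abs_of_nonneg (by linarith : (0:ℝ) ≤ -v x),
          abs_of_nonpos h]
      · rw [max_eq_right (by linarith)]; simp [abs_nonneg]
  -- ∫ f * w ≥ 0
  have hfw : 0 ≤ ∫ x in B1 N, f x * w x := by
    refine integral_nonneg_of_ae ?_
    filter_upwards [hfpos] with x hx
    exact mul_nonneg hx (le_max_right _ _)
  -- v * w = - w^2
  have hvw : ∀ x, v x * w x = -(w x ^ 2) := by
    intro x
    rcases le_or_gt (v x) 0 with h | h
    · simp only [hw]; rw [max_eq_left (by linarith)]; ring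
    · simp only [hw]; rw [max_eq_right (by linarith)]; ring
  have hsq_int : Integrable (fun x => w x ^ 2) μ := hwL2.integrable_sq
  have hsq_nonneg : 0 ≤ᵐ[μ] fun x => w x ^ 2 :=
    Filter.Eventually.of_forall fun x => sq_nonneg _
  have hI : ∫ x in B1 N, w x ^ 2 ∂volume ≤ 0 := by
    have h1 : ∫ x in B1 N, v x * w x = -(∫ x in B1 N, w x ^ 2) := by
      rw [← integral_neg]
      exact integral_congr_ae (Filter.Eventually.of_forall fun x => by simpa using hvw x)
    have h2 : (∫ x in B1 N, v x * w x) ≥ ∫ x in B1 N, f x * w x := by linarith [heq, hKint]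
    have := le_trans hfw h2
    rw [h1] at this
    linarith
  have hIzero : ∫ x, w x ^ 2 ∂μ = 0 :=
    le_antisymm hI (integral_nonneg fun x => sq_nonneg _)
  have hzero : (fun x => w x ^ 2) =ᵐ[μ] 0 :=
    (integral_eq_zero_iff_of_nonneg_ae hsq_nonneg hsq_int).mp hIzero
  filter_upwards [hzero] with x hx
  have hwx : w x = 0 := by
    have : w x ^ 2 = 0 := by simpa using hx
    exact pow_eq_zero_iff (by norm_num) |>.mp this
  have h2 : -v x ≤ w x := le_max_left _ _
  rw [hwx] at h2
  linarith
end
end
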